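/- Let μ, λ > 0, let ν ∈ ℝⁿ be a unit vector, and let g ∈ ℝⁿ be given. Suppose w: ℝⁿ → ℝⁿ is differentiable at a point with ∇w_i = d_i ν for scalars d_i (i = 1,…,n), i.e., each component's gradient is parallel to ν. Then the equation σ(w)ν = g (with σ(w) = 2με(w) + λ tr(ε(w))I_n) is equivalent to d_i = (1/μ)(g_i − ((μ+λ)ν_i/(2μ+λ)) ∑_j g_j ν_j) for each i. -/

import Mathlib

open scoped RealInnerProductSpace

noncomputable section

/-- The linearized strain tensor `ε(w)_{ij} = ½(∂_j w_i + ∂_i w_j)`. -/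
def epsM (n : ℕ) (w : EuclideanSpace ℝ (Fin n) → EuclideanSpace ℝ (Fin n))
    (x : EuclideanSpace ℝ (Fin n)) (i j : Fin n) : ℝ :=
  (1 / 2) * (fderiv ℝ (fun y => w y i) x (EuclideanSpace.single j 1) +
             fderiv ℝ (fun y => w y j) x (EuclideanSpace.single i 1))

/-- The isotropic stress tensor `σ(w) = 2με(w) + λ tr(ε(w)) Iₙ`. -/
def sigM (n : ℕ) (μ lam : ℝ) (w : EuclideanSpace ℝ (Fin n) → EuclideanSpace ℝ (Fin n))
    (x : EuclideanSpace ℝ (Fin n)) (i j : Fin n) : ℝ :=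
  2 * μ * epsM n w x i j + (if i = j then lam * (∑ k : Fin n, epsM n w x k k) else 0)

/-- the algebraic inversion in the elastic trace lemma. Let `μ, λ > 0`, `ν` a
unit vector, `g ∈ ℝⁿ`, and let `w` be differentiable at `x` with each component's gradient
parallel to `ν`: `∇w_i = d_i ν`. Then `σ(w)ν = g` at `x` iff
`d_i = (1/μ)(g_i − ((μ+λ)ν_i/(2μ+λ)) ∑_j g_j ν_j)` for each `i`. -/
theorem elastic_trace_algebraic_inversion
    (n : ℕ) (μ lam : ℝ) (hμ : 0 < μ) (hlam : 0 < lam)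
    (ν : EuclideanSpace ℝ (Fin n)) (hν : ‖ν‖ = 1)
    (g d : Fin n → ℝ)
    (w : EuclideanSpace ℝ (Fin n) → EuclideanSpace ℝ (Fin n))
    (x : EuclideanSpace ℝ (Fin n))
    (hw : ∀ i : Fin n, HasFDerivAt (fun y => w y i) ((d i) • (innerSL ℝ ν)) x) :
    (∀ i : Fin n, (∑ j : Fin n, sigM n μ lam w x i j * ν j) = g i) ↔
    (∀ i : Fin n, d i =
      (1 / μ) * (g i - ((μ + lam) * ν i / (2 * μ + lam)) * ∑ j : Fin n, g j * ν j)) := by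
  have hfd : ∀ i j : Fin n,
      fderiv ℝ (fun y => w y i) x (EuclideanSpace.single j 1) = d i * ν j := by
    intro i j
    rw [(hw i).fderiv]
    simp [real_inner_comm ν, EuclideanSpace.inner_single_left, EuclideanSpace.inner_single_right]
  have heps : ∀ i j : Fin n, epsM n w x i j = (1/2) * (d i * ν j + d j * ν i) := by
    intro i j; rw [epsM, hfd, hfd]
  have hnorm : (∑ j : Fin n, ν j * ν j) = 1 := by
    have := real_inner_self_eq_norm_sq ν
    rw [hν, PiLp.inner_apply] at this
    simp only [RCLike.inner_apply, conj_trivial, one_pow] at this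
    exact this
  set S := ∑ j : Fin n, d j * ν j with hS
  have hsig : ∀ i : Fin n,
      (∑ j : Fin n, sigM n μ lam w x i j * ν j) = μ * d i + (μ + lam) * ν i * S := by
    intro i
    have : ∀ j : Fin n, sigM n μ lam w x i j * ν j =
        μ * d i * (ν j * ν j) + μ * (d j * ν j) * ν i
          + (if i = j then lam * (∑ k : Fin n, epsM n w x k k) else 0) * ν j := by
      intro j; rw [sigM, heps]; ring
    rw [Finset.sum_congr rfl (fun j _ => this j)]
    rw [Finset.sum_add_distrib, Finset.sum_add_distrib, ← Finset.mul_sum, hnorm]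
    have htr : (∑ k : Fin n, epsM n w x k k) = S := by
      rw [hS, Finset.sum_congr rfl (fun k _ => heps k k)]
      apply Finset.sum_congr rfl; intro k _; ring
    have hif : (∑ j : Fin n, (if i = j then lam * (∑ k : Fin n, epsM n w x k k) else 0) * ν j)
        = lam * S * ν i := by
      rw [Finset.sum_eq_single i]
      · simp [htr]
      · intro b _ hb; simp [Ne.symm hb]
      · simp
    rw [hif]
    have : (∑ j : Fin n, μ * (d j * ν j) * ν i) = μ * S * ν i := by
      rw [hS, Finset.mul_sum, Finset.sum_mul]
    rw [this]; ring
  have h2 : (2 * μ + lam) ≠ 0 := by positivity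
  have hμ' : μ ≠ 0 := ne_of_gt hμ
  constructor
  · intro h i
    have hG : (∑ j : Fin n, g j * ν j) = (2 * μ + lam) * S := by
      have : ∀ j : Fin n, g j * ν j = (μ * d j + (μ + lam) * ν j * S) * ν j := by
        intro j; rw [← h j, hsig]
      rw [Finset.sum_congr rfl (fun j _ => this j)]
      have : ∀ j : Fin n, (μ * d j + (μ + lam) * ν j * S) * ν j
          = μ * (d j * ν j) + (μ + lam) * S * (ν j * ν j) := by intro j; ring
      rw [Finset.sum_congr rfl (fun j _ => this j), Finset.sum_add_distrib,
        ← Finset.mul_sum, ← Finset.mul_sum, hnorm, hS]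
      ring
    have hi := h i
    rw [hsig] at hi
    have hd : μ * d i = g i - (μ + lam) * ν i * S := by linarith
    rw [hG]
    have hcanc : ((μ + lam) * ν i / (2 * μ + lam)) * ((2 * μ + lam) * S)
        = (μ + lam) * ν i * S := by field_simp
    rw [hcanc, ← hd]
    field_simp
  · intro h i
    have hSval : S = (∑ j : Fin n, g j * ν j) / (2 * μ + lam) := by
      set G := ∑ j : Fin n, g j * ν j with hGdef
      have : ∀ j : Fin n, d j * ν j
          = (1 / μ) * (g j * ν j) - (1 / μ) * ((μ + lam) * G / (2 * μ + lam)) * (ν j * ν j) := by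
        intro j; rw [h j]; ring
      rw [hS, Finset.sum_congr rfl (fun j _ => this j), Finset.sum_sub_distrib,
        ← Finset.mul_sum, ← Finset.mul_sum, hnorm, ← hGdef]
      field_simp
      ring
    rw [hsig, h i, hSval]
    field_simp
    ring
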